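/- Suppose 0 ≤ p_t^Γ(x,y) ≤ p_t(y-x) where ∫_{ℝ^d} p_t(z) dz = 1, p_t^Γ satisfies Chapman–Kolmogorov, and suppose |x| < 1, |y| ≤ 4 and p_1(x,y) ≥ c₀ > 0 whenever |x-y| < 5. If moreover P_x(τ_Γ > 1/2) ≤ C P_x(τ_Γ > 1), then p_1^Γ(x,y) ≤ c₀^{-1} C sup_w p_{1/2}(w) · P_x(τ_Γ > 1) p_1(x,y), where P_x(τ_Γ > s) := ∫ p_s^Γ(x,w) dw. In particular p_1^Γ(x,y) ≤ c P_x(τ_Γ > 1) p_1(x,y) for a constant c depending only on c₀, C and sup p_{1/2}. -/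
import Mathlib


open MeasureTheory Metric Real Set

/-- for `|x| < 1`, `|y| ≤ 4`, from Chapman–Kolmogorov,
boundedness `p_{1/2} ≤ M`, positivity `p_1(x,y) ≥ c₀` for `|x-y| < 5`, and
`P_x(τ_Γ > 1/2) ≤ C P_x(τ_Γ > 1)`, one gets
`p_1^Γ(x,y) ≤ c₀⁻¹ C M · P_x(τ_Γ > 1) p_1(x,y)`. -/
theorem near_vertex_upper_bound (d : ℕ) (hd : 1 ≤ d) (α c₀ C M : ℝ)
    (hα₀ : 0 < α) (hα₂ : α < 2) (hc₀ : 0 < c₀) (hC : 0 < C) (hM : 0 < M)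
    (p : ℝ → EuclideanSpace ℝ (Fin d) → ℝ)
    (hpnn : ∀ t : ℝ, 0 < t → ∀ z, 0 ≤ p t z)
    (hprob : ∀ t : ℝ, 0 < t → ∫ z, p t z = 1)
    (hpbdd : ∀ z, p (1 / 2) z ≤ M)
    (pΓ : ℝ → EuclideanSpace ℝ (Fin d) → EuclideanSpace ℝ (Fin d) → ℝ)
    (hΓnn : ∀ t x y, 0 ≤ pΓ t x y)
    (hΓle : ∀ t : ℝ, 0 < t → ∀ x y, pΓ t x y ≤ p t (y - x))
    (hCK : ∀ x y, ∫ w, pΓ (1 / 2) x w * pΓ (1 / 2) w y = pΓ 1 x y)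
    (hΓint : ∀ t : ℝ, 0 < t → ∀ x, Integrable (fun w => pΓ t x w))
    (hp1 : ∀ x y : EuclideanSpace ℝ (Fin d), ‖x - y‖ < 5 → c₀ ≤ p 1 (y - x))
    (x y : EuclideanSpace ℝ (Fin d)) (hx : ‖x‖ < 1) (hy : ‖y‖ ≤ 4)
    (hsurv : (∫ w, pΓ (1 / 2) x w) ≤ C * ∫ w, pΓ 1 x w) :
    pΓ 1 x y ≤ c₀⁻¹ * C * M * (∫ w, pΓ 1 x w) * p 1 (y - x) := by
  have hxy : ‖x - y‖ < 5 := by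
    calc ‖x - y‖ ≤ ‖x‖ + ‖y‖ := norm_sub_le x y
    _ < 5 := by linarith
  have hp := hp1 x y hxy
  have hInn : 0 ≤ ∫ w, pΓ 1 x w :=
    integral_nonneg fun w => hΓnn 1 x w
  have h1 : pΓ 1 x y ≤ M * ∫ w, pΓ (1 / 2) x w := by
    rw [← hCK x y]
    have : (∫ w, pΓ (1 / 2) x w * pΓ (1 / 2) w y) ≤ ∫ w, M * pΓ (1 / 2) x w := by
      apply integral_mono_of_nonneg
      · filter_upwards with w
        exact mul_nonneg (hΓnn _ _ _) (hΓnn _ _ _)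
      · exact ((hΓint (1/2) (by norm_num) x).const_mul M)
      · filter_upwards with w
        calc pΓ (1 / 2) x w * pΓ (1 / 2) w y
            ≤ pΓ (1 / 2) x w * M := by
              apply mul_le_mul_of_nonneg_left _ (hΓnn _ _ _)
              exact le_trans (hΓle (1/2) (by norm_num) w y) (hpbdd _)
          _ = M * pΓ (1 / 2) x w := mul_comm _ _
    rwa [integral_const_mul] at this
  have h2 : pΓ 1 x y ≤ M * (C * ∫ w, pΓ 1 x w) :=
    h1.trans (by nlinarith)
  have h3 : (1 : ℝ) ≤ c₀⁻¹ * p 1 (y - x) := by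
    rw [← one_mul c₀] at hp
    exact (le_inv_mul_iff₀ hc₀).mpr (by linarith)
  nlinarith [mul_nonneg (mul_nonneg hM.le hC.le) hInn]
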